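/- arXiv:math/0303267 — 4 statements merged into one kernel-verified Lean document; each statement's English description precedes it below -/
import Mathlib

section
/- For every even natural number n ≥ 2, there are no tremolo permutations of 0, 1, …, n+1 beginning with 1 and ending with 0; that is, the set of bijections f : Fin (n+2) → Fin (n+2) with f 0 = 1, f (n+1) = 0, and alternating consecutive differences is empty, so J n = 0. -/
/-- A permutation `f` of `{0, 1, ..., n+1}` is *tremolo* when consecutive differences in the
list `f 0, f 1, ..., f (n+1)` alternate in sign. -/
def IsTremolo {n : ℕ} (f : Equiv.Perm (Fin (n + 2))) : Prop :=
  ∀ i : ℕ, ∀ _ : i + 2 ≤ n + 1,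
    (f ⟨i, by omega⟩ < f ⟨i + 1, by omega⟩ ↔ ¬ f ⟨i + 1, by omega⟩ < f ⟨i + 2, by omega⟩)

/-- `J n` is the number of tremolo permutations of `0, 1, ..., n+1` that begin with `1`
and end with `0`. -/
noncomputable def J (n : ℕ) : ℕ :=
  Nat.card {f : Equiv.Perm (Fin (n + 2)) //
    IsTremolo f ∧ f 0 = 1 ∧ f (Fin.last (n + 1)) = 0}

set_option maxHeartbeats 2000000 in
/-- For every even `n ≥ 2` there are no tremolo permutations of `0, 1, ..., n+1` beginning
with `1` and ending with `0`: the set of such permutations is empty, so `J n = 0`. -/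
theorem J_eq_zero_of_even (n : ℕ) (hn : 2 ≤ n) (he : Even n) :
    IsEmpty {f : Equiv.Perm (Fin (n + 2)) //
      IsTremolo f ∧ f 0 = 1 ∧ f (Fin.last (n + 1)) = 0} ∧ J n = 0 := by
  have hE : IsEmpty {f : Equiv.Perm (Fin (n + 2)) //
      IsTremolo f ∧ f 0 = 1 ∧ f (Fin.last (n + 1)) = 0} := by
    constructor
    rintro ⟨f, hT, h0, hlast⟩
    have hne : ∀ a b : Fin (n + 2), a ≠ b → f a ≠ f b := fun a b h => f.injective.ne h
    have h0' : f ⟨0, by omega⟩ = 1 := h0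
    have hlast' : f ⟨n + 1, by omega⟩ = 0 := by
      have : Fin.last (n + 1) = ⟨n + 1, by omega⟩ := rfl
      rw [← this]; exact hlast
    have key : ∀ i : ℕ, ∀ _ : i ≤ n,
        ((f ⟨i, by omega⟩ < f ⟨i + 1, by omega⟩) ↔ Even i) := by
      intro i
      induction i with
      | zero =>
        intro _
        simp only [Even.zero, iff_true]
        show f ⟨0, by omega⟩ < f ⟨1, by omega⟩
        have h1 : (f ⟨1, by omega⟩ : Fin (n+2)) ≠ 0 := by
          rw [← hlast']
          exact hne _ _ (by simp [Fin.ext_iff]; omega)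
        have h2 : (f ⟨1, by omega⟩ : Fin (n+2)) ≠ f ⟨0, by omega⟩ :=
          hne _ _ (by simp [Fin.ext_iff])
        rw [h0'] at h2
        rw [Fin.lt_def, h0']
        have v1 : ((1 : Fin (n+2)) : ℕ) = 1 := rfl
        have e1 : (f ⟨1, by omega⟩ : Fin (n+2)).val ≠ 0 := by
          intro h; apply h1; exact Fin.ext (by rw [h]; simp)
        have e2 : (f ⟨1, by omega⟩ : Fin (n+2)).val ≠ 1 := by
          simpa [Fin.ext_iff] using h2
        omega
      | succ k ih =>
        intro hk
        have ht := hT k (by omega)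
        have hih := ih (by omega)
        have hB : f ⟨k + 1, by omega⟩ < f ⟨k + 1 + 1, by omega⟩ ↔
            ¬ f ⟨k, by omega⟩ < f ⟨k + 1, by omega⟩ := by tauto
        rw [hB, hih, Nat.even_add_one]
    have hfin := key n le_rfl
    have : f ⟨n, by omega⟩ < f ⟨n + 1, by omega⟩ := hfin.mpr he
    rw [hlast'] at this
    exact absurd this (by simp)
  haveI := hE
  exact ⟨hE, by unfold J; exact Nat.card_of_isEmpty⟩
end

section
/- Let t n denote the n-th iterated derivative of the real tangent function at 0, i.e. t n = iteratedDeriv n Real.tan 0. Then t 0 = 0, t 1 = 1, and for every natural number n ≥ 1, t (n+1) = ∑_{m=0}^{n} (n.choose m) * t m * t (n−m). -/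
open Topology Finset

private lemma iDW_open {s : Set ℝ} (hs : IsOpen s) {x : ℝ} (hx : x ∈ s) (n : ℕ) (f : ℝ → ℝ) :
    iteratedDerivWithin n f s x = iteratedDeriv n f x := by
  simp [iteratedDerivWithin_eq_iteratedFDerivWithin, iteratedDeriv_eq_iteratedFDeriv,
    iteratedFDerivWithin_of_isOpen n hs hx]

private lemma diffAt_iD {s : Set ℝ} (hs : IsOpen s) {f : ℝ → ℝ} (hf : ContDiffOn ℝ ⊤ f s)
    (m : ℕ) {x : ℝ} (hx : x ∈ s) : DifferentiableAt ℝ (iteratedDeriv m f) x := by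
  have h1 : DifferentiableOn ℝ (iteratedDerivWithin m f s) s :=
    hf.differentiableOn_iteratedDerivWithin (by exact_mod_cast WithTop.coe_lt_top (m : ℕ∞))
      hs.uniqueDiffOn
  have h2 : DifferentiableAt ℝ (iteratedDerivWithin m f s) x :=
    (h1 x hx).differentiableAt (hs.mem_nhds hx)
  refine h2.congr_of_eventuallyEq ?_
  filter_upwards [hs.mem_nhds hx] with y hy
  exact (iDW_open hs hy m f).symm

private lemma leibniz_sum (a b : ℕ → ℝ) (n : ℕ) :
    ∑ m ∈ range (n + 1), (n.choose m : ℝ) * (a (m + 1) * b (n - m) + a m * b (n - m + 1)) =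
      ∑ m ∈ range (n + 2), ((n + 1).choose m : ℝ) * (a m * b (n + 1 - m)) := by
  have hS2 : ∑ m ∈ range (n + 1), (n.choose m : ℝ) * (a m * b (n - m + 1)) =
      (∑ m ∈ range (n + 1), (n.choose (m + 1) : ℝ) * (a (m + 1) * b (n - m))) + a 0 * b (n + 1) := by
    rw [Finset.sum_range_succ' (fun m => (n.choose m : ℝ) * (a m * b (n - m + 1))) n]
    rw [Finset.sum_range_succ (fun m => (n.choose (m + 1) : ℝ) * (a (m + 1) * b (n - m))) n]
    simp only [Nat.choose_succ_self, Nat.cast_zero, zero_mul, add_zero, Nat.choose_zero_right,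
      Nat.cast_one, one_mul, Nat.sub_zero]
    congr 1
    refine Finset.sum_congr rfl fun m hm => ?_
    have hm' : m < n := Finset.mem_range.mp hm
    have h2 : n - (m + 1) + 1 = n - m := by omega
    rw [h2]
  rw [Finset.sum_range_succ' (fun m => ((n + 1).choose m : ℝ) * (a m * b (n + 1 - m))) (n + 1)]
  simp only [mul_add]
  rw [Finset.sum_add_distrib, hS2]
  simp only [Nat.choose_zero_right, Nat.cast_one, one_mul, Nat.sub_zero]
  rw [← add_assoc, ← Finset.sum_add_distrib]
  congr 1
  refine Finset.sum_congr rfl fun m hm => ?_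
  have : ((n + 1).choose (m + 1) : ℝ) = (n.choose m : ℝ) + (n.choose (m + 1) : ℝ) := by
    rw [Nat.choose_succ_succ]; push_cast; ring
  rw [this]
  have hsub : n + 1 - (m + 1) = n - m := by omega
  rw [hsub]
  ring

private lemma leibniz {s : Set ℝ} (hs : IsOpen s) {f g : ℝ → ℝ}
    (hf : ContDiffOn ℝ ⊤ f s) (hg : ContDiffOn ℝ ⊤ g s) (n : ℕ) :
    ∀ x ∈ s, iteratedDeriv n (fun y => f y * g y) x =
      ∑ m ∈ range (n + 1), (n.choose m : ℝ) * (iteratedDeriv m f x * iteratedDeriv (n - m) g x) := by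
  induction n with
  | zero => intro x hx; simp
  | succ n IH =>
    intro x hx
    rw [iteratedDeriv_succ]
    have hev : iteratedDeriv n (fun y => f y * g y) =ᶠ[𝓝 x]
        fun y => ∑ m ∈ range (n + 1),
          (n.choose m : ℝ) * (iteratedDeriv m f y * iteratedDeriv (n - m) g y) := by
      filter_upwards [hs.mem_nhds hx] with y hy using IH y hy
    rw [hev.deriv_eq]
    have hdiff : ∀ m ∈ range (n + 1), DifferentiableAt ℝ
        (fun y => (n.choose m : ℝ) * (iteratedDeriv m f y * iteratedDeriv (n - m) g y)) x :=
      fun m _ => (((diffAt_iD hs hf m hx).mul (diffAt_iD hs hg (n - m) hx)).const_mul _)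
    rw [deriv_fun_sum hdiff]
    have hterm : ∀ m ∈ range (n + 1),
        deriv (fun y => (n.choose m : ℝ) * (iteratedDeriv m f y * iteratedDeriv (n - m) g y)) x =
        (n.choose m : ℝ) * (iteratedDeriv (m + 1) f x * iteratedDeriv (n - m) g x +
          iteratedDeriv m f x * iteratedDeriv (n - m + 1) g x) := by
      intro m _
      rw [deriv_const_mul (d := fun y => iteratedDeriv m f y * iteratedDeriv (n - m) g y) _ ((diffAt_iD hs hf m hx).mul (diffAt_iD hs hg (n - m) hx)),
        deriv_fun_mul (diffAt_iD hs hf m hx) (diffAt_iD hs hg (n - m) hx)]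
      rw [iteratedDeriv_succ, iteratedDeriv_succ]
    rw [Finset.sum_congr rfl hterm]
    exact leibniz_sum (fun m => iteratedDeriv m f x) (fun m => iteratedDeriv m g x) n

/-- Let `t n = iteratedDeriv n Real.tan 0`. Then `t 0 = 0`, `t 1 = 1`, and for all `n ≥ 1`,
`t (n+1) = ∑_{m=0}^{n} C(n, m) * t m * t (n - m)`. -/
theorem tan_iteratedDeriv_recurrence :
    iteratedDeriv 0 Real.tan 0 = 0 ∧ iteratedDeriv 1 Real.tan 0 = 1 ∧
      ∀ n : ℕ, 1 ≤ n →
        iteratedDeriv (n + 1) Real.tan 0 =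
          ∑ m ∈ Finset.range (n + 1),
            (n.choose m : ℝ) * iteratedDeriv m Real.tan 0 *
              iteratedDeriv (n - m) Real.tan 0 := by
  set s : Set ℝ := {x | Real.cos x ≠ 0} with hs_def
  have hs : IsOpen s := isOpen_compl_iff.mpr (isClosed_eq Real.continuous_cos continuous_const)
  have h0 : (0 : ℝ) ∈ s := by simp [hs_def, Real.cos_zero]
  have htan : ContDiffOn ℝ ⊤ Real.tan s :=
    fun x hx => (Real.contDiffAt_tan.2 hx).contDiffWithinAt
  refine ⟨by simp, ?_, ?_⟩
  · rw [iteratedDeriv_one, Real.deriv_tan]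
    simp
  · intro n hn
    rw [iteratedDeriv_succ']
    have hev : deriv Real.tan =ᶠ[𝓝 (0 : ℝ)] fun y => 1 + Real.tan y * Real.tan y := by
      filter_upwards [hs.mem_nhds h0] with y hy
      rw [Real.deriv_tan, ← sq, one_div, ← Real.inv_one_add_tan_sq hy, inv_inv]
    rw [(hev.iteratedDeriv_eq n : _)]
    have h1 : iteratedDeriv n (fun y => 1 + Real.tan y * Real.tan y) 0 =
        iteratedDeriv n (fun y => Real.tan y * Real.tan y) 0 := by
      rw [← iDW_open hs h0, ← iDW_open hs h0]
      exact iteratedDerivWithin_const_add (by omega) 1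
    rw [h1, leibniz hs htan htan n 0 h0]
    exact Finset.sum_congr rfl fun m _ => by ring
end

section
/- Let B : ℕ → ℕ → ℝ satisfy the Boustrophedon recurrence: B 0 0 = 1, B (n+1) 0 = 0 for all n, and B (n+1) (k+1) = B (n+1) k + B n (n − k) for all n and all k ≤ n. Then for every odd natural number n, the diagonal entry B n n equals the n-th iterated derivative of the tangent function at 0: B n n = iteratedDeriv n Real.tan 0. -/
open Real Set Finset Topology

namespace BoustAux

noncomputable def sec : ℝ → ℝ := fun x => (Real.cos x)⁻¹

def I : Set ℝ := Set.Ioo (-(Real.pi / 2)) (Real.pi / 2)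

lemma isOpen_I : IsOpen I := isOpen_Ioo

lemma zero_mem_I : (0 : ℝ) ∈ I := by
  constructor <;> [linarith [Real.pi_pos]; linarith [Real.pi_pos]]

lemma cos_ne_zero_I {x : ℝ} (hx : x ∈ I) : Real.cos x ≠ 0 :=
  (Real.cos_pos_of_mem_Ioo hx).ne'

lemma contDiffOn_sec : ContDiffOn ℝ ⊤ sec I :=
  (Real.contDiff_cos.contDiffOn).inv fun _ hx => cos_ne_zero_I hx

lemma contDiffOn_sin : ContDiffOn ℝ ⊤ Real.sin I := Real.contDiff_sin.contDiffOn
lemma contDiffOn_cos : ContDiffOn ℝ ⊤ Real.cos I := Real.contDiff_cos.contDiffOn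

/-- On an open set, within-iterated-derivative equals the global one. -/
lemma itW {f : ℝ → ℝ} {s : Set ℝ} (hs : IsOpen s) {x : ℝ} (hx : x ∈ s) (n : ℕ) :
    iteratedDerivWithin n f s x = iteratedDeriv n f x := by
  rw [iteratedDerivWithin_eq_iteratedFDerivWithin, iteratedDeriv_eq_iteratedFDeriv,
    iteratedFDerivWithin_of_isOpen n hs hx]

/-- Leibniz rule for iterated derivatives of functions smooth on an open set. -/
lemma leibniz {s : Set ℝ} (hs : IsOpen s) (n : ℕ) {f g : ℝ → ℝ}
    (hf : ContDiffOn ℝ ⊤ f s) (hg : ContDiffOn ℝ ⊤ g s) {x : ℝ} (hx : x ∈ s) :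
    iteratedDeriv n (fun y => f y * g y) x =
      ∑ i ∈ Finset.range (n + 1),
        (n.choose i : ℝ) * (iteratedDeriv i f x * iteratedDeriv (n - i) g x) := by
  induction n generalizing f g with
  | zero => simp
  | succ n IH =>
    have hf' : ContDiffOn ℝ ⊤ (deriv f) s := hf.deriv_of_isOpen hs le_top
    have hg' : ContDiffOn ℝ ⊤ (deriv g) s := hg.deriv_of_isOpen hs le_top
    have hev : (deriv fun y => f y * g y) =ᶠ[𝓝 x]
        fun y => deriv f y * g y + f y * deriv g y := by
      filter_upwards [hs.mem_nhds hx] with y hy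
      exact deriv_fun_mul ((hf.differentiableOn (by simp)).differentiableAt (hs.mem_nhds hy))
        ((hg.differentiableOn (by simp)).differentiableAt (hs.mem_nhds hy))
    have hsum : iteratedDeriv n (fun y => deriv f y * g y + f y * deriv g y) x
        = iteratedDeriv n (fun y => deriv f y * g y) x
          + iteratedDeriv n (fun y => f y * deriv g y) x := by
      rw [← itW hs hx, ← itW hs hx, ← itW hs hx]
      exact iteratedDerivWithin_add hx hs.uniqueDiffOn ((hf'.mul hg).of_le le_top x hx)
        ((hf.mul hg').of_le le_top x hx)
    rw [iteratedDeriv_succ', hev.iteratedDeriv_eq n, hsum, IH hf' hg, IH hf hg',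
      Finset.sum_choose_succ_mul (fun i k => iteratedDeriv i f x * iteratedDeriv k g x) n]
    have h1 : ∑ i ∈ Finset.range (n + 1),
        (n.choose i : ℝ) * (iteratedDeriv i (deriv f) x * iteratedDeriv (n - i) g x)
        = ∑ i ∈ Finset.range (n + 1),
        (n.choose i : ℝ) * (iteratedDeriv (i + 1) f x * iteratedDeriv (n - i) g x) := by
      refine Finset.sum_congr rfl fun i _ => ?_
      rw [iteratedDeriv_succ']
    have h2 : ∑ i ∈ Finset.range (n + 1),
        (n.choose i : ℝ) * (iteratedDeriv i f x * iteratedDeriv (n - i) (deriv g) x)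
        = ∑ i ∈ Finset.range (n + 1),
        (n.choose i : ℝ) * (iteratedDeriv i f x * iteratedDeriv (n + 1 - i) g x) := by
      refine Finset.sum_congr rfl fun i hi => ?_
      have : n + 1 - i = (n - i) + 1 := by
        simp only [Finset.mem_range] at hi; omega
      rw [this, iteratedDeriv_succ']
    rw [h1, h2, add_comm]

noncomputable def cc (j : ℕ) : ℝ := iteratedDeriv j Real.cos 0
noncomputable def dd (j : ℕ) : ℝ := iteratedDeriv j Real.sin 0
noncomputable def ss (j : ℕ) : ℝ := iteratedDeriv j sec 0

lemma cc_zero : cc 0 = 1 := by simp [cc]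
lemma dd_zero : dd 0 = 0 := by simp [dd]

lemma cc_succ (j : ℕ) : cc (j + 1) = -dd j := by
  rw [cc, iteratedDeriv_succ', Real.deriv_cos', dd, ← iteratedDeriv_neg]
  rfl

lemma dd_succ (j : ℕ) : dd (j + 1) = cc j := by
  rw [dd, iteratedDeriv_succ', Real.deriv_sin, cc]

noncomputable def A (m N : ℕ) : ℝ :=
  ∑ j ∈ Finset.range (m + 1), (m.choose j : ℝ) * (cc j * ss (N - j))

noncomputable def D (k N : ℕ) : ℝ :=
  ∑ i ∈ Finset.range (k + 1), (k.choose i : ℝ) * (dd i * ss (N - i))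

lemma iteratedDeriv_const' (n : ℕ) (c : ℝ) (x : ℝ) :
    iteratedDeriv n (fun _ : ℝ => c) x = if n = 0 then c else 0 := by
  induction n generalizing c x with
  | zero => simp
  | succ n IH =>
    rw [iteratedDeriv_succ']
    have : deriv (fun _ : ℝ => c) = fun _ : ℝ => (0 : ℝ) := deriv_const' c
    rw [this, IH]
    simp

/-- `A N N` is the iterated derivative of `cos * sec = 1`. -/
lemma A_diag (N : ℕ) : A N N = if N = 0 then 1 else 0 := by
  have h := leibniz isOpen_I N contDiffOn_cos contDiffOn_sec zero_mem_I
  have hev : (fun y => Real.cos y * sec y) =ᶠ[𝓝 (0 : ℝ)] fun _ => (1 : ℝ) := by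
    filter_upwards [isOpen_I.mem_nhds zero_mem_I] with y hy
    exact mul_inv_cancel₀ (cos_ne_zero_I hy)
  simp only [A, cc, ss]
  rw [← h, hev.iteratedDeriv_eq N, iteratedDeriv_const']

/-- The `n`-th derivative of `tan` at `0` equals `D n n`. -/
lemma tan_eq_D (N : ℕ) : iteratedDeriv N Real.tan 0 = D N N := by
  have htan : Real.tan = fun y => Real.sin y * sec y := by
    funext y; rw [Real.tan_eq_sin_div_cos, div_eq_mul_inv]; rfl
  simp only [D, cc, dd, ss]
  rw [htan, leibniz isOpen_I N contDiffOn_sin contDiffOn_sec zero_mem_I]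

lemma A_step {m N : ℕ} (hmN : m ≤ N) : A (m + 1) (N + 1) = A m (N + 1) - D m N := by
  have e1 : A (m + 1) (N + 1)
      = ∑ j ∈ Finset.range (m + 2), ((m + 1).choose j : ℝ) * (cc j * ss (N - m + (m + 1 - j))) := by
    rw [A]
    refine Finset.sum_congr rfl fun j hj => ?_
    have hj' : j ≤ m + 1 := by simp only [Finset.mem_range] at hj; omega
    have : N - m + (m + 1 - j) = N + 1 - j := by omega
    rw [this]
  rw [e1, Finset.sum_choose_succ_mul (fun i k => cc i * ss (N - m + k)) m]
  have e2 : ∑ i ∈ Finset.range (m + 1), ((m.choose i : ℝ)) * (cc i * ss (N - m + (m + 1 - i)))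
      = A m (N + 1) := by
    rw [A]
    refine Finset.sum_congr rfl fun i hi => ?_
    have hi' : i ≤ m := by simp only [Finset.mem_range] at hi; omega
    have : N - m + (m + 1 - i) = N + 1 - i := by omega
    rw [this]
  have e3 : ∑ i ∈ Finset.range (m + 1), ((m.choose i : ℝ)) * (cc (i + 1) * ss (N - m + (m - i)))
      = -D m N := by
    rw [D, ← Finset.sum_neg_distrib]
    refine Finset.sum_congr rfl fun i hi => ?_
    have hi' : i ≤ m := by simp only [Finset.mem_range] at hi; omega
    have : N - m + (m - i) = N - i := by omega
    rw [this, cc_succ]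
    ring
  rw [e2, e3]
  ring

lemma D_step {k N : ℕ} (hkN : k ≤ N) : D (k + 1) (N + 1) = D k (N + 1) + A k N := by
  have e1 : D (k + 1) (N + 1)
      = ∑ j ∈ Finset.range (k + 2), ((k + 1).choose j : ℝ) * (dd j * ss (N - k + (k + 1 - j))) := by
    rw [D]
    refine Finset.sum_congr rfl fun j hj => ?_
    have hj' : j ≤ k + 1 := by simp only [Finset.mem_range] at hj; omega
    have : N - k + (k + 1 - j) = N + 1 - j := by omega
    rw [this]
  rw [e1, Finset.sum_choose_succ_mul (fun i m => dd i * ss (N - k + m)) k]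
  have e2 : ∑ i ∈ Finset.range (k + 1), ((k.choose i : ℝ)) * (dd i * ss (N - k + (k + 1 - i)))
      = D k (N + 1) := by
    rw [D]
    refine Finset.sum_congr rfl fun i hi => ?_
    have hi' : i ≤ k := by simp only [Finset.mem_range] at hi; omega
    have : N - k + (k + 1 - i) = N + 1 - i := by omega
    rw [this]
  have e3 : ∑ i ∈ Finset.range (k + 1), ((k.choose i : ℝ)) * (dd (i + 1) * ss (N - k + (k - i)))
      = A k N := by
    rw [A]
    refine Finset.sum_congr rfl fun i hi => ?_
    have hi' : i ≤ k := by simp only [Finset.mem_range] at hi; omega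
    have : N - k + (k - i) = N - i := by omega
    rw [this, dd_succ]
  rw [e2, e3]

lemma ss_zero : ss 0 = 1 := by
  simp [ss, sec]

lemma key (B : ℕ → ℕ → ℝ) (h0 : B 0 0 = 1) (hrow : ∀ n : ℕ, B (n + 1) 0 = 0)
    (hrec : ∀ n k : ℕ, k ≤ n → B (n + 1) (k + 1) = B (n + 1) k + B n (n - k)) :
    ∀ n k : ℕ, k ≤ n → B n k = A (n - k) n + D k n := by
  intro n
  induction n with
  | zero =>
    intro k hk
    interval_cases k
    rw [h0]
    simp [A, D, cc_zero, dd_zero, ss_zero]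
  | succ n IH =>
    intro k
    induction k with
    | zero =>
      intro _
      rw [hrow n, Nat.sub_zero, A_diag (n + 1)]
      simp [D, dd_zero]
    | succ k IHk =>
      intro hk1
      have hk : k ≤ n := by omega
      rw [hrec n k hk, IHk (by omega), IH (n - k) (by omega)]
      have h1 : n + 1 - k = (n - k) + 1 := by omega
      have h2 : n - (n - k) = k := by omega
      have h3 : n + 1 - (k + 1) = n - k := by omega
      rw [h1, h2, h3, A_step (by omega : n - k ≤ n), D_step hk]
      ring

lemma ss_odd {n : ℕ} (hn : Odd n) : ss n = 0 := by
  have h1 : (fun x : ℝ => sec (-x)) = sec := by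
    funext x; simp [sec, Real.cos_neg]
  have h2 := iteratedDeriv_comp_neg n sec 0
  rw [h1, neg_zero, hn.neg_one_pow] at h2
  have h3 : ss n = -ss n := by
    simpa [ss] using h2
  linarith

end BoustAux

/-- If `B` satisfies the Boustrophedon recurrence, then for every odd `n`, the diagonal
entry `B n n` equals the `n`-th iterated derivative of `tan` at `0`. -/
theorem boustrophedon_diagonal_odd_eq_tan (B : ℕ → ℕ → ℝ) (h0 : B 0 0 = 1)
    (hrow : ∀ n : ℕ, B (n + 1) 0 = 0)
    (hrec : ∀ n k : ℕ, k ≤ n → B (n + 1) (k + 1) = B (n + 1) k + B n (n - k))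
    (n : ℕ) (hn : Odd n) :
    B n n = iteratedDeriv n Real.tan 0 := by
  rw [BoustAux.key B h0 hrow hrec n n le_rfl, Nat.sub_self]
  have hA : BoustAux.A 0 n = BoustAux.ss n := by
    simp [BoustAux.A, BoustAux.cc_zero]
  rw [hA, BoustAux.ss_odd hn, BoustAux.tan_eq_D n]
  ring
end

section
/- Let B : ℕ → ℕ → ℝ satisfy the Boustrophedon recurrence: B 0 0 = 1, B (n+1) 0 = 0 for all n, and B (n+1) (k+1) = B (n+1) k + B n (n − k) for all n and all k ≤ n. Then for every even natural number n, the diagonal entry B n n equals the n-th iterated derivative of the secant function at 0: B n n = iteratedDeriv n (fun x => (Real.cos x)⁻¹) 0. -/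
open Real Set Finset
open scoped ContDiff

noncomputable section


def ph : ℝ → ℝ := fun t => Real.cos (t/2) - Real.sin (t/2)
def Ph : ℕ → ℝ → ℝ := fun i => deriv^[i] ph
def ps : ℝ → ℝ := fun t => (ph t)⁻¹
def Ps : ℕ → ℝ → ℝ := fun j => deriv^[j] ps
def UU : Set ℝ := Ioo (-1) 1

lemma UU_open : IsOpen UU := isOpen_Ioo
lemma zero_mem_UU : (0:ℝ) ∈ UU := by constructor <;> norm_num
lemma neg_mem_UU {y : ℝ} (hy : y ∈ UU) : -y ∈ UU := by
  obtain ⟨h1, h2⟩ := hy; constructor <;> [linarith; linarith]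

lemma ph_contDiff : ContDiff ℝ ∞ ph := by
  unfold ph
  exact (Real.contDiff_cos.comp (contDiff_id.div_const 2)).sub
    (Real.contDiff_sin.comp (contDiff_id.div_const 2))

lemma ph_eq (t : ℝ) : ph t = Real.sqrt 2 * Real.cos (t/2 + π/4) := by
  rw [Real.cos_add, Real.cos_pi_div_four, Real.sin_pi_div_four]
  have h3 : Real.sqrt 2 ^ 2 = 2 := Real.sq_sqrt (by norm_num)
  unfold ph
  linear_combination (-(Real.cos (t/2) - Real.sin (t/2))/2) * h3

lemma ph_pos {y : ℝ} (hy : y ∈ UU) : 0 < ph y := by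
  obtain ⟨h1, h2⟩ := hy
  rw [ph_eq]
  have hpi : (3:ℝ) < π := Real.pi_gt_three
  apply mul_pos (Real.sqrt_pos.mpr (by norm_num))
  apply Real.cos_pos_of_mem_Ioo
  have hm : y/2 + π/4 ∈ Set.Ioo (-(π/2)) (π/2) := by
    constructor <;> nlinarith
  exact hm

lemma ph_ne {y : ℝ} (hy : y ∈ UU) : ph y ≠ 0 := (ph_pos hy).ne'


lemma Ph_succ (i : ℕ) : Ph (i+1) = deriv (Ph i) := Function.iterate_succ_apply' deriv i ph

lemma Ph_contDiff (i : ℕ) : ContDiff ℝ ∞ (Ph i) := by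
  induction i with
  | zero => exact ph_contDiff
  | succ i ih => rw [Ph_succ]; exact (contDiff_infty_iff_deriv.mp ih).2

lemma Ph_hasDerivAt (i : ℕ) (y : ℝ) : HasDerivAt (Ph i) (Ph (i+1) y) y := by
  rw [Ph_succ]
  exact (((Ph_contDiff i).differentiable (by simp)) y).hasDerivAt

lemma Ps_succ (j : ℕ) : Ps (j+1) = deriv (Ps j) := Function.iterate_succ_apply' deriv j ps

lemma Ps_contDiffOn (j : ℕ) : ContDiffOn ℝ ∞ (Ps j) UU := by
  induction j with
  | zero =>
    exact ContDiffOn.inv (ph_contDiff.contDiffOn) (fun y hy => ph_ne hy)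
  | succ j ih => rw [Ps_succ]; exact ih.deriv_of_isOpen UU_open (by simp)

lemma Ps_hasDerivAt (j : ℕ) {y : ℝ} (hy : y ∈ UU) : HasDerivAt (Ps j) (Ps (j+1) y) y := by
  rw [Ps_succ]
  have := ((Ps_contDiffOn j).differentiableOn (by simp)).differentiableAt (UU_open.mem_nhds hy)
  exact this.hasDerivAt

lemma ph_deriv (t : ℝ) : deriv ph t = -(ph (-t))/2 := by
  have hc : HasDerivAt (fun t:ℝ => Real.cos (t/2)) (-Real.sin (t/2) * (1/2)) t :=
    by have h := (Real.hasDerivAt_cos (t/2)).comp t ((hasDerivAt_id t).div_const 2); exact h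
  have hs : HasDerivAt (fun t:ℝ => Real.sin (t/2)) (Real.cos (t/2) * (1/2)) t :=
    by have h := (Real.hasDerivAt_sin (t/2)).comp t ((hasDerivAt_id t).div_const 2); exact h
  have h : HasDerivAt ph (-Real.sin (t/2) * (1/2) - Real.cos (t/2) * (1/2)) t := hc.sub hs
  rw [h.deriv]
  unfold ph
  rw [show (-t)/2 = -(t/2) by ring, Real.cos_neg, Real.sin_neg]
  ring


-- composed with neg
lemma Ph_neg_hasDerivAt (i : ℕ) (y : ℝ) :
    HasDerivAt (fun y => Ph i (-y)) (-(Ph (i+1) (-y))) y := by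
  have h := (Ph_hasDerivAt i (-y)).comp y (hasDerivAt_neg y)
  simpa [Function.comp_def] using h

lemma Ph_reflect : ∀ i t, 2 * Ph (i+1) t = -((-1:ℝ)^i * Ph i (-t)) := by
  intro i
  induction i with
  | zero =>
    intro t
    have : Ph 1 t = deriv ph t := by rw [Ph_succ]; rfl
    rw [this, ph_deriv]
    simp [Ph]
    ring
  | succ i ih =>
    intro t
    have hfun : Ph (i+1) = fun t => -((-1:ℝ)^i * Ph i (-t)) / 2 := by
      funext u; have := ih u; linarith
    have hd : HasDerivAt (fun t => -((-1:ℝ)^i * Ph i (-t)) / 2)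
        (-((-1:ℝ)^i * (-(Ph (i+1) (-t)))) / 2) t := by
      have := (Ph_neg_hasDerivAt i t).const_mul ((-1:ℝ)^i)
      have h2 := this.neg.div_const 2
      exact h2
    have : Ph (i+2) t = deriv (Ph (i+1)) t := by rw [Ph_succ]
    rw [this]
    conv_lhs => rw [hfun]
    rw [hd.deriv]
    ring


lemma pascal_sum (m : ℕ) (a b : ℕ → ℝ) :
    ∑ l ∈ range (m+2), ((m+1).choose l : ℝ) * a l * b (m+1-l)
      = (∑ l ∈ range (m+1), (m.choose l : ℝ) * a (l+1) * b (m-l))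
        + ∑ l ∈ range (m+1), (m.choose l : ℝ) * a l * b (m+1-l) := by
  rw [Finset.sum_range_succ' _ (m+1)]
  have h1 : ∀ l ∈ range (m+1), ((m+1).choose (l+1) : ℝ) * a (l+1) * b (m+1-(l+1))
      = (m.choose l : ℝ) * a (l+1) * b (m-l)
        + (m.choose (l+1) : ℝ) * a (l+1) * b (m+1-(l+1)) := by
    intro l hl
    rw [Nat.choose_succ_succ]
    have h : m + 1 - (l+1) = m - l := by omega
    rw [h]; push_cast; ring
  rw [Finset.sum_congr rfl h1, Finset.sum_add_distrib]
  have hc0 : ((m+1).choose 0 : ℝ) = (m.choose 0 : ℝ) := by norm_num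
  rw [hc0]
  have h2 : (∑ l ∈ range (m+1), (m.choose (l+1) : ℝ) * a (l+1) * b (m+1-(l+1)))
      + (m.choose 0 : ℝ) * a 0 * b (m+1-0)
      = ∑ l ∈ range (m+1), (m.choose l : ℝ) * a l * b (m+1-l) := by
    rw [← Finset.sum_range_succ' (fun l => (m.choose l : ℝ) * a l * b (m+1-l)) (m+1),
      Finset.sum_range_succ]
    simp
  rw [add_assoc, h2]

def gg : ℕ → ℝ → ℝ := fun m y => ∑ j ∈ range (m+1), (m.choose j : ℝ) * Ph j (-y) * Ps (m-j) y
def rr : ℕ → ℝ → ℝ :=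
  fun m y => ∑ j ∈ range (m+1), (-1:ℝ)^j * (m.choose j : ℝ) * Ph j y * Ps (m-j) y

lemma gg_contDiffOn (m : ℕ) : ContDiffOn ℝ ∞ (gg m) UU := by
  apply ContDiffOn.sum
  intro j hj
  exact (((Ph_contDiff j).comp contDiff_neg).contDiffOn.mul (Ps_contDiffOn (m-j))).const_smul
    ((m.choose j : ℝ)) |>.congr (fun y hy => by simp [smul_eq_mul]; ring)

lemma rr_contDiffOn (m : ℕ) : ContDiffOn ℝ ∞ (rr m) UU := by
  apply ContDiffOn.sum
  intro j hj
  exact ((Ph_contDiff j).contDiffOn.mul (Ps_contDiffOn (m-j))).const_smul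
    ((-1:ℝ)^j * (m.choose j : ℝ)) |>.congr (fun y hy => by simp [smul_eq_mul]; ring)

lemma gg_hasDerivAt (m : ℕ) {y : ℝ} (hy : y ∈ UU) :
    HasDerivAt (gg m) (gg (m+1) y + rr m y) y := by
  have hterm : ∀ j ∈ range (m+1),
      HasDerivAt (fun y => (m.choose j : ℝ) * Ph j (-y) * Ps (m-j) y)
        ((m.choose j : ℝ) * (-(Ph (j+1) (-y))) * Ps (m-j) y
          + (m.choose j : ℝ) * Ph j (-y) * Ps (m-j+1) y) y := by
    intro j hj
    exact (((Ph_neg_hasDerivAt j y).const_mul ((m.choose j : ℝ))).mul (Ps_hasDerivAt (m-j) hy))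
  have h := HasDerivAt.fun_sum hterm
  have e1 : ∀ j ∈ range (m+1), (m.choose j : ℝ) * Ph j (-y) * Ps (m+1-j) y
      = (m.choose j : ℝ) * Ph j (-y) * Ps (m-j+1) y := by
    intro j hj
    simp only [Finset.mem_range] at hj
    have hh : m + 1 - j = m - j + 1 := by omega
    rw [hh]
  have e2 : ∀ j ∈ range (m+1), (m.choose j : ℝ) * (-(Ph (j+1) (-y))) * Ps (m-j) y
      = (m.choose j : ℝ) * Ph (j+1) (-y) * Ps (m-j) y
        + (-1:ℝ)^j * (m.choose j : ℝ) * Ph j y * Ps (m-j) y := by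
    intro j hj
    have hr := Ph_reflect j (-y)
    rw [neg_neg] at hr
    rcases Nat.even_or_odd j with h2 | h2
    · rw [h2.neg_one_pow] at hr ⊢
      linear_combination (-(m.choose j : ℝ) * Ps (m-j) y) * hr
    · rw [h2.neg_one_pow] at hr ⊢
      linear_combination (-(m.choose j : ℝ) * Ps (m-j) y) * hr
  have heq : ∑ j ∈ range (m+1),
      ((m.choose j : ℝ) * (-(Ph (j+1) (-y))) * Ps (m-j) y
        + (m.choose j : ℝ) * Ph j (-y) * Ps (m-j+1) y)
      = gg (m+1) y + rr m y := by
    unfold gg rr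
    rw [show m+1+1 = m+2 from rfl, pascal_sum m (fun l => Ph l (-y)) (fun i => Ps i y)]
    rw [Finset.sum_add_distrib, Finset.sum_congr rfl e2, Finset.sum_add_distrib,
      Finset.sum_congr rfl e1]
    ring
  rwa [heq] at h

lemma rr_hasDerivAt (m : ℕ) {y : ℝ} (hy : y ∈ UU) :
    HasDerivAt (rr m) (rr (m+1) y - gg m y) y := by
  have hterm : ∀ j ∈ range (m+1),
      HasDerivAt (fun y => (-1:ℝ)^j * (m.choose j : ℝ) * Ph j y * Ps (m-j) y)
        ((-1:ℝ)^j * (m.choose j : ℝ) * Ph (j+1) y * Ps (m-j) y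
          + (-1:ℝ)^j * (m.choose j : ℝ) * Ph j y * Ps (m-j+1) y) y := by
    intro j hj
    exact (((Ph_hasDerivAt j y).const_mul ((-1:ℝ)^j * (m.choose j : ℝ))).mul
      (Ps_hasDerivAt (m-j) hy))
  have h := HasDerivAt.fun_sum hterm
  have hps : ∀ l ∈ range (m+2), (-1:ℝ)^l * ((m+1).choose l : ℝ) * Ph l y * Ps (m+1-l) y
      = ((m+1).choose l : ℝ) * ((-1:ℝ)^l * Ph l y) * Ps (m+1-l) y := fun l _ => by ring
  have e1 : ∀ j ∈ range (m+1), (m.choose j : ℝ) * ((-1:ℝ)^j * Ph j y) * Ps (m+1-j) y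
      = (-1:ℝ)^j * (m.choose j : ℝ) * Ph j y * Ps (m-j+1) y := by
    intro j hj
    simp only [Finset.mem_range] at hj
    have hh : m + 1 - j = m - j + 1 := by omega
    rw [hh]; ring
  have e2 : ∀ j ∈ range (m+1),
      (m.choose j : ℝ) * ((-1:ℝ)^(j+1) * Ph (j+1) y) * Ps (m-j) y
      = (-1:ℝ)^j * (m.choose j : ℝ) * Ph (j+1) y * Ps (m-j) y
        + (m.choose j : ℝ) * Ph j (-y) * Ps (m-j) y := by
    intro j hj
    have hr := Ph_reflect j y
    rw [pow_succ]
    rcases Nat.even_or_odd j with h2 | h2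
    · rw [h2.neg_one_pow] at hr ⊢
      linear_combination (-(m.choose j : ℝ) * Ps (m-j) y) * hr
    · rw [h2.neg_one_pow] at hr ⊢
      linear_combination ((m.choose j : ℝ) * Ps (m-j) y) * hr
  have heq : ∑ j ∈ range (m+1),
      ((-1:ℝ)^j * (m.choose j : ℝ) * Ph (j+1) y * Ps (m-j) y
        + (-1:ℝ)^j * (m.choose j : ℝ) * Ph j y * Ps (m-j+1) y)
      = rr (m+1) y - gg m y := by
    unfold gg rr
    rw [show m+1+1 = m+2 from rfl, Finset.sum_congr rfl hps,
      pascal_sum m (fun l => (-1:ℝ)^l * Ph l y) (fun i => Ps i y)]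
    rw [Finset.sum_add_distrib, Finset.sum_congr rfl e2, Finset.sum_add_distrib,
      Finset.sum_congr rfl e1]
    ring
  rwa [heq] at h


-- iterated derivative helpers
lemma itd_open {f : ℝ → ℝ} {n : ℕ} {x : ℝ} (hx : x ∈ UU) :
    iteratedDerivWithin n f UU x = iteratedDeriv n f x := by
  rw [iteratedDerivWithin, iteratedDeriv, iteratedFDerivWithin_of_isOpen n UU_open hx]

lemma itd_congr {f g : ℝ → ℝ} {n : ℕ} {x : ℝ} (hx : x ∈ UU) (h : Set.EqOn f g UU) :
    iteratedDeriv n f x = iteratedDeriv n g x :=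
  h.iteratedDeriv_of_isOpen UU_open n hx

lemma itd_add {f g : ℝ → ℝ} (hf : ContDiffOn ℝ ∞ f UU) (hg : ContDiffOn ℝ ∞ g UU) (n : ℕ) :
    iteratedDeriv n (fun y => f y + g y) 0 = iteratedDeriv n f 0 + iteratedDeriv n g 0 := by
  rw [← itd_open (f := fun y => f y + g y) zero_mem_UU, ← itd_open (f := f) zero_mem_UU,
    ← itd_open (f := g) zero_mem_UU]
  exact iteratedDerivWithin_add zero_mem_UU (UU_open.uniqueDiffOn)
    ((hf.contDiffWithinAt zero_mem_UU).of_le (by exact_mod_cast le_top))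
    ((hg.contDiffWithinAt zero_mem_UU).of_le (by exact_mod_cast le_top))

def EE (k m : ℕ) : ℝ := iteratedDeriv k (gg m) 0
def DD (k m : ℕ) : ℝ := iteratedDeriv k (rr m) 0

lemma EE_succ (k m : ℕ) : EE (k+1) m = EE k (m+1) + DD k m := by
  unfold EE DD
  rw [iteratedDeriv_succ']
  have h1 : iteratedDeriv k (deriv (gg m)) 0
      = iteratedDeriv k (fun y => gg (m+1) y + rr m y) 0 := by
    apply itd_congr zero_mem_UU
    intro y hy
    exact (gg_hasDerivAt m hy).deriv
  rw [h1, itd_add (gg_contDiffOn (m+1)) (rr_contDiffOn m)]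

lemma DD_succ (k m : ℕ) : DD (k+1) m = DD k (m+1) - EE k m := by
  unfold EE DD
  rw [iteratedDeriv_succ']
  have h1 : iteratedDeriv k (deriv (rr m)) 0
      = iteratedDeriv k (fun y => rr (m+1) y + -(gg m y)) 0 := by
    apply itd_congr zero_mem_UU
    intro y hy
    rw [(rr_hasDerivAt m hy).deriv]
    ring
  rw [h1, itd_add (rr_contDiffOn (m+1)) (gg_contDiffOn m).neg]
  have : iteratedDeriv k (fun y => -(gg m y)) 0 = -iteratedDeriv k (gg m) 0 :=
    iteratedDeriv_neg k (gg m) 0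
  rw [this]; ring

lemma itd_const_one (k : ℕ) : iteratedDeriv k (fun _ : ℝ => (1:ℝ)) 0 = if k = 0 then 1 else 0 := by
  induction k with
  | zero => simp [iteratedDeriv_zero]
  | succ k ih =>
    rw [iteratedDeriv_succ']
    have : deriv (fun _ : ℝ => (1:ℝ)) = fun _ : ℝ => (0:ℝ) := by
      funext x; exact deriv_const x 1
    rw [this]
    have h0 : iteratedDeriv k (fun _ : ℝ => (0:ℝ)) 0 = 0 := by
      rw [iteratedDeriv_const]; simp
    simp [h0]

lemma leib : ∀ m i j, iteratedDeriv m (fun x => Ph i x * Ps j x) 0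
    = ∑ l ∈ range (m+1), (m.choose l : ℝ) * Ph (i+l) 0 * Ps (j+(m-l)) 0 := by
  intro m
  induction m with
  | zero => intro i j; simp [iteratedDeriv_zero]
  | succ m ih =>
    intro i j
    rw [iteratedDeriv_succ']
    have h1 : iteratedDeriv m (deriv (fun x => Ph i x * Ps j x)) 0
        = iteratedDeriv m (fun x => Ph (i+1) x * Ps j x + Ph i x * Ps (j+1) x) 0 := by
      apply itd_congr zero_mem_UU
      intro y hy
      exact ((Ph_hasDerivAt i y).mul (Ps_hasDerivAt j hy)).deriv
    have hc1 : ContDiffOn ℝ ∞ (fun x => Ph (i+1) x * Ps j x) UU :=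
      (Ph_contDiff (i+1)).contDiffOn.mul (Ps_contDiffOn j)
    have hc2 : ContDiffOn ℝ ∞ (fun x => Ph i x * Ps (j+1) x) UU :=
      (Ph_contDiff i).contDiffOn.mul (Ps_contDiffOn (j+1))
    rw [h1, itd_add hc1 hc2, ih (i+1) j, ih i (j+1)]
    rw [show m+1+1 = m+2 from rfl,
      pascal_sum m (fun l => Ph (i+l) 0) (fun r => Ps (j+r) 0)]
    congr 1
    · apply Finset.sum_congr rfl
      intro l hl
      have : i + 1 + l = i + (l + 1) := by omega
      rw [this]
    · apply Finset.sum_congr rfl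
      intro l hl
      simp only [Finset.mem_range] at hl
      have : j + 1 + (m - l) = j + (m + 1 - l) := by omega
      rw [this]

lemma ph_zero : ph 0 = 1 := by simp [ph]
lemma ps_zero : ps 0 = 1 := by simp [ps, ph]

lemma EE_zero_zero : EE 0 0 = 1 := by
  unfold EE gg
  rw [iteratedDeriv_zero]
  simp [Ph, Ps, ph_zero, ps_zero]

lemma DD_zero_zero : DD 0 0 = 1 := by
  unfold DD rr
  rw [iteratedDeriv_zero]
  simp [Ph, Ps, ph_zero, ps_zero]

lemma rr_zero_eqOn : Set.EqOn (rr 0) (fun _ => (1:ℝ)) UU := by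
  intro y hy
  unfold rr
  simp [Ph, Ps, ps, mul_inv_cancel₀ (ph_ne hy)]

lemma DD_row (k : ℕ) : DD (k+1) 0 = 0 := by
  unfold DD
  rw [itd_congr zero_mem_UU rr_zero_eqOn, itd_const_one]
  simp

lemma EE_row (m : ℕ) : EE 0 (m+1) = 0 := by
  unfold EE
  rw [iteratedDeriv_zero]
  have h1 : gg (m+1) 0 = ∑ l ∈ range (m+2), ((m+1).choose l : ℝ) * Ph (0+l) 0 * Ps (0+(m+1-l)) 0 := by
    unfold gg
    apply Finset.sum_congr rfl
    intro l hl
    rw [neg_zero]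
    norm_num
  rw [h1, ← leib (m+1) 0 0]
  have h2 : Set.EqOn (fun x => Ph 0 x * Ps 0 x) (fun _ => (1:ℝ)) UU := by
    intro y hy
    simp [Ph, Ps, ps, mul_inv_cancel₀ (ph_ne hy)]
  rw [itd_congr zero_mem_UU h2, itd_const_one]
  simp


def Can (n k : ℕ) : ℝ := if Even n then EE k (n-k) else DD (n-k) k

lemma Can_zero : Can 0 0 = 1 := by simp [Can, EE_zero_zero]

lemma Can_row (n : ℕ) : Can (n+1) 0 = 0 := by
  unfold Can
  by_cases h : Even (n+1)
  · simp [h, EE_row n]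
  · simp [h, DD_row n]

lemma Can_rec (n k : ℕ) (hk : k ≤ n) : Can (n+1) (k+1) = Can (n+1) k + Can n (n-k) := by
  have h1 : n + 1 - (k+1) = n - k := by omega
  have h2 : n + 1 - k = (n - k) + 1 := by omega
  have h3 : n - (n - k) = k := by omega
  by_cases h : Even (n+1)
  · have hn : ¬ Even n := by simp [Nat.even_add_one] at h; simpa using h
    simp only [Can, if_pos h, if_neg hn, h1, h2, h3]
    rw [EE_succ]
  · have hn : Even n := by simpa [Nat.even_add_one] using h
    simp only [Can, if_neg h, if_pos hn, h1, h2, h3]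
    have := DD_succ (n-k) k
    linarith

lemma gg0_eq (y : ℝ) : gg 0 y = ph (-y) * ps y := by simp [gg, Ph, Ps]

lemma ph_mul_reflect (y : ℝ) : ph y * ph (-y) = Real.cos y := by
  unfold ph
  rw [show (-y)/2 = -(y/2) by ring, Real.cos_neg, Real.sin_neg]
  have h := Real.cos_two_mul (y/2)
  rw [show 2*(y/2) = y by ring] at h
  nlinarith [h, Real.sin_sq_add_cos_sq (y/2)]

lemma ph_sq_add (y : ℝ) : ph y ^ 2 + ph (-y) ^ 2 = 2 := by
  unfold ph
  rw [show (-y)/2 = -(y/2) by ring, Real.cos_neg, Real.sin_neg]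
  nlinarith [Real.sin_sq_add_cos_sq (y/2)]

lemma cos_ne_UU {y : ℝ} (hy : y ∈ UU) : Real.cos y ≠ 0 := by
  rw [← ph_mul_reflect]
  exact mul_ne_zero (ph_ne hy) (ph_ne (neg_mem_UU hy))

lemma key_eqOn : Set.EqOn (fun y => gg 0 y + gg 0 (-y)) (fun y => 2 * (Real.cos y)⁻¹) UU := by
  intro y hy
  have ha := ph_ne hy
  have hb := ph_ne (neg_mem_UU hy)
  have hc := cos_ne_UU hy
  simp only [gg0_eq, neg_neg, ps]
  rw [← ph_mul_reflect y]
  field_simp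
  nlinarith [ph_sq_add y]

theorem EE_diag (n : ℕ) (hn : Even n) :
    EE n 0 = iteratedDeriv n (fun x => (Real.cos x)⁻¹) 0 := by
  have hUUneg : ContDiffOn ℝ ∞ (fun y => gg 0 (-y)) UU :=
    (gg_contDiffOn 0).comp contDiff_neg.contDiffOn (fun y hy => neg_mem_UU hy)
  have hadd := itd_add (gg_contDiffOn 0) hUUneg n
  have hneg : iteratedDeriv n (fun y => gg 0 (-y)) 0 = iteratedDeriv n (gg 0) 0 := by
    rw [iteratedDeriv_comp_neg n (gg 0) 0, hn.neg_one_pow, neg_zero, one_smul]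
  have hsec : ContDiffOn ℝ ∞ (fun y => (Real.cos y)⁻¹) UU :=
    ContDiffOn.inv (Real.contDiff_cos.contDiffOn) (fun y hy => cos_ne_UU hy)
  have hmul : iteratedDeriv n (fun y => 2 * (Real.cos y)⁻¹) 0
      = 2 * iteratedDeriv n (fun y => (Real.cos y)⁻¹) 0 := by
    rw [← itd_open (n := n) (f := fun y => 2 * (Real.cos y)⁻¹) zero_mem_UU,
      ← itd_open (n := n) (f := fun y => (Real.cos y)⁻¹) zero_mem_UU]
    exact iteratedDerivWithin_const_mul zero_mem_UU UU_open.uniqueDiffOn 2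
      ((hsec.contDiffWithinAt zero_mem_UU).of_le (by exact_mod_cast le_top))
  have hcongr := itd_congr (n := n) zero_mem_UU key_eqOn
  unfold EE
  rw [hneg] at hadd
  rw [hcongr, hmul] at hadd
  linarith


/-- If `B` satisfies the Boustrophedon recurrence, then for every even `n`, the diagonal
entry `B n n` equals the `n`-th iterated derivative of `sec = fun x => (cos x)⁻¹` at `0`. -/
theorem boustrophedon_diagonal_even_eq_sec (B : ℕ → ℕ → ℝ) (h0 : B 0 0 = 1)
    (hrow : ∀ n : ℕ, B (n + 1) 0 = 0)
    (hrec : ∀ n k : ℕ, k ≤ n → B (n + 1) (k + 1) = B (n + 1) k + B n (n - k))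
    (n : ℕ) (hn : Even n) :
    B n n = iteratedDeriv n (fun x => (Real.cos x)⁻¹) 0 := by
  have hBC : ∀ n, ∀ k, k ≤ n → B n k = Can n k := by
    intro n
    induction n with
    | zero =>
      intro k hk
      have : k = 0 := Nat.le_zero.mp hk
      subst this
      rw [h0, Can_zero]
    | succ n ihn =>
      intro k hk
      induction k with
      | zero => rw [hrow n, Can_row n]
      | succ k ihk =>
        have hk' : k ≤ n := by omega
        rw [hrec n k hk', Can_rec n k hk', ihk (by omega), ihn (n-k) (by omega)]
  rw [hBC n n le_rfl]
  have hcan : Can n n = EE n 0 := by simp [Can, hn]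
  rw [hcan, EE_diag n hn]

end
end
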